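/- Condition C implies: for every x, y ∈ K and every t₁, t₂ ∈ [0,1], η(y + t₂·η(x,y), y + t₁·η(x,y)) = (t₂ − t₁)·η(x,y). -/

import Mathlib

theorem condition_C_consequence
    (K : Set ℝ) (hK : IsOpen K) (η : ℝ → ℝ → ℝ)
    (hinvex : ∀ x ∈ K, ∀ y ∈ K, ∀ t ∈ Set.Icc (0 : ℝ) 1, y + t * η x y ∈ K)
    (hC1 : ∀ x ∈ K, ∀ y ∈ K, ∀ t ∈ Set.Icc (0 : ℝ) 1,
      η y (y + t * η x y) = -t * η x y)
    (hC2 : ∀ x ∈ K, ∀ y ∈ K, ∀ t ∈ Set.Icc (0 : ℝ) 1,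
      η x (y + t * η x y) = (1 - t) * η x y) :
    ∀ x ∈ K, ∀ y ∈ K, ∀ t₁ ∈ Set.Icc (0 : ℝ) 1, ∀ t₂ ∈ Set.Icc (0 : ℝ) 1,
      η (y + t₂ * η x y) (y + t₁ * η x y) = (t₂ - t₁) * η x y := by
  intro x hx y hy t₁ ht₁ t₂ ht₂
  obtain ⟨h10, h11⟩ := ht₁
  obtain ⟨h20, h21⟩ := ht₂
  have hw : y + t₂ * η x y ∈ K := hinvex x hx y hy t₂ ⟨h20, h21⟩
  set w := y + t₂ * η x y with hwdef
  rcases le_or_gt t₂ t₁ with h | h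
  · rcases eq_or_lt_of_le h21 with h2e | h2l
    · -- t₂ = 1, hence t₁ = 1
      have h1e : t₁ = 1 := le_antisymm h11 (h2e ▸ h)
      have h0 := hC1 x hx w hw 0 ⟨le_rfl, zero_le_one⟩
      simp only [zero_mul, add_zero, neg_zero] at h0
      rw [h1e, show y + 1 * η x y = w from by rw [hwdef, h2e], h0, h2e]
      ring
    · -- t₂ < 1
      have hne : (1 : ℝ) - t₂ ≠ 0 := by linarith
      set s := (t₁ - t₂) / (1 - t₂) with hsdef
      have hs0 : 0 ≤ s := div_nonneg (by linarith) (by linarith)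
      have hs1 : s ≤ 1 := by
        rw [div_le_one (by linarith)]; linarith
      have hxw : η x w = (1 - t₂) * η x y := hC2 x hx y hy t₂ ⟨h20, h21⟩
      have key := hC1 x hx w hw s ⟨hs0, hs1⟩
      have heq : w + s * η x w = y + t₁ * η x y := by
        rw [hxw, hwdef, hsdef]; field_simp; ring
      rw [heq, hxw, hsdef] at key
      rw [key]; field_simp; ring
  · -- t₂ > t₁ ≥ 0
    have ht2pos : (0 : ℝ) < t₂ := lt_of_le_of_lt h10 h
    set s := (t₂ - t₁) / t₂ with hsdef
    have hs0 : 0 ≤ s := div_nonneg (by linarith) (by linarith)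
    have hs1 : s ≤ 1 := by rw [div_le_one ht2pos]; linarith
    have hyw : η y w = -t₂ * η x y := hC1 x hx y hy t₂ ⟨h20, h21⟩
    have key := hC1 y hy w hw s ⟨hs0, hs1⟩
    have heq : w + s * η y w = y + t₁ * η x y := by
      rw [hyw, hwdef, hsdef]; field_simp; ring
    rw [heq, hyw, hsdef] at key
    rw [key]; field_simp
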